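/- Let k be a field, I a set, and f : ∏_{i∈I} k → k a k-linear map whose kernel contains the subset ∏_{i∈I∖J} {0,1} (elements with entries 0 or 1 vanishing on J) for some finite J ⊆ I, and whose kernel contains the direct sum ⊕_{i∈I∖J} k. Then the kernel of f contains all of ∏_{i∈I∖J} k, i.e. every element (a_i) with a_j = 0 for j ∈ J lies in ker f, provided ker f is open in the k-ified product topology. -/

import Mathlib

open Topology

/-- The `k`-ification of a topological space: a set is open iff its intersection with
every compact subset `K` is open in `K`. -/
def kification (X : Type*) [TopologicalSpace X] : TopologicalSpace X :=
  ⨆ (K : Set X) (_ : IsCompact K),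
    TopologicalSpace.coinduced (Subtype.val : K → X) inferInstance

/-- If `f : ∏_{i ∈ I} k → k` is a `k`-linear map whose kernel is open in the
`k`-ification of the product topology, contains all `{0,1}`-valued tuples vanishing on a
finite set `J ⊆ I`, and contains the direct sum `⊕_{i ∈ I∖J} k` (the finitely supported
tuples vanishing on `J`), then the kernel contains all of `∏_{i ∈ I∖J} k`: every `x` with
`x j = 0` for `j ∈ J` lies in `ker f`. -/
theorem stmt_1 (k I : Type*) [Field k] [TopologicalSpace k] [DiscreteTopology k]
    (f : (I → k) →ₗ[k] k) (J : Finset I)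
    (hopen : IsOpen[kification (I → k)] {x : I → k | f x = 0})
    (h01 : ∀ x : I → k, (∀ i, x i = 0 ∨ x i = 1) → (∀ j ∈ J, x j = 0) → f x = 0)
    (hds : ∀ x : I → k, ({i : I | x i ≠ 0}).Finite → (∀ j ∈ J, x j = 0) → f x = 0) :
    ∀ x : I → k, (∀ j ∈ J, x j = 0) → f x = 0 := by
  classical
  intro x hx
  -- The compact set of tuples with entries in {0, x i}, vanishing on J
  set F : I → Set k := fun i => if i ∈ J then {0} else {0, x i} with hF
  have hF0 : ∀ i, (0 : k) ∈ F i := by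
    intro i
    simp only [hF]
    split
    · exact Set.mem_singleton 0
    · exact Set.mem_insert 0 _
  set K : Set (I → k) := Set.pi Set.univ F with hKdef
  have hKc : IsCompact K := by
    apply isCompact_univ_pi
    intro i
    apply Set.Finite.isCompact
    simp only [hF]
    split
    · exact Set.finite_singleton 0
    · exact (Set.finite_singleton (x i)).insert 0
  have hxK : x ∈ K := by
    intro i _
    simp only [hF]
    split
    · next h => exact hx i h
    · exact Set.mem_insert_iff.mpr (Or.inr rfl)
  have h0K : (0 : I → k) ∈ K := fun i _ => hF0 i
  -- Openness of the kernel in the subspace topology of K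
  unfold kification at hopen
  simp only [isOpen_iSup_iff, isOpen_coinduced] at hopen
  have hU : IsOpen ((Subtype.val : K → (I → k)) ⁻¹' {x : I → k | f x = 0}) :=
    hopen K hKc
  rw [isOpen_induced_iff] at hU
  obtain ⟨V, hVopen, hVeq⟩ := hU
  have h0V : (0 : I → k) ∈ V := by
    have : (⟨0, h0K⟩ : K) ∈ Subtype.val ⁻¹' V := by
      rw [hVeq]
      simp only [Set.mem_preimage, Set.mem_setOf_eq, map_zero]
    exact this
  obtain ⟨S, t, hto, hsub⟩ := (isOpen_pi_iff.mp hVopen) 0 h0V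
  -- Every element of K lies in the kernel
  have key : ∀ y ∈ K, f y = 0 := by
    intro y hy
    set y₁ : I → k := fun i => if i ∈ S then 0 else y i with hy₁
    set y₂ : I → k := fun i => if i ∈ S then y i else 0 with hy₂
    have hsum : y = y₁ + y₂ := by
      funext i
      simp only [hy₁, hy₂, Pi.add_apply]
      split <;> simp
    have h1 : f y₁ = 0 := by
      have hy₁K : y₁ ∈ K := by
        intro i _
        simp only [hy₁]
        split
        · exact hF0 i
        · exact hy i (Set.mem_univ i)
      have hy₁V : y₁ ∈ V := by
        apply hsub
        intro i hi
        have : y₁ i = 0 := by simp [hy₁, Finset.mem_coe.mp hi]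
        rw [this]
        exact (hto i hi).2
      have : (⟨y₁, hy₁K⟩ : K) ∈ Subtype.val ⁻¹' {x : I → k | f x = 0} := by
        rw [← hVeq]
        exact hy₁V
      exact this
    have h2 : f y₂ = 0 := by
      apply hds
      · apply Set.Finite.subset S.finite_toSet
        intro i hi
        simp only [Set.mem_setOf_eq, hy₂] at hi
        by_contra h
        rw [if_neg (fun hm => h (Finset.mem_coe.mpr hm))] at hi
        exact hi rfl
      · intro j hj
        simp only [hy₂]
        split
        · have := hy j (Set.mem_univ j)
          simp only [hF, if_pos hj, Set.mem_singleton_iff] at this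
          exact this
        · rfl
    rw [hsum, map_add, h1, h2, add_zero]
  exact key x hxK
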